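/- arXiv:1403.6085 — 10 statements merged into one kernel-verified Lean document; each statement's English description precedes it below -/
import Mathlib

section
/- Let ε > 0 and M ≥ 0 be real numbers, and let x, f, t : ℕ → ℝ be sequences such that 0 ≤ x(0) ≤ M and, for every n: f(n) ≤ (M − x(n))/ε, 0 ≤ t(n) ≤ ε, x(n+1) = x(n) + f(n)·t(n), and x(n) + f(n)·s ≥ 0 for every s ∈ [0, t(n)]. Then 0 ≤ x(n) ≤ M for every n ∈ ℕ. -/
theorem watertank_loop_invariant (ε M : ℝ) (hε : ε > 0) (hM : M ≥ 0)
    (x f t : ℕ → ℝ)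
    (hx0 : 0 ≤ x 0 ∧ x 0 ≤ M)
    (hf : ∀ n, f n ≤ (M - x n) / ε)
    (ht : ∀ n, 0 ≤ t n ∧ t n ≤ ε)
    (hstep : ∀ n, x (n + 1) = x n + f n * t n)
    (hdom : ∀ n, ∀ s ∈ Set.Icc (0 : ℝ) (t n), x n + f n * s ≥ 0) :
    ∀ n, 0 ≤ x n ∧ x n ≤ M := by
  intro n
  induction n with
  | zero => exact hx0
  | succ k ih =>
    constructor
    · have := hdom k (t k) ⟨(ht k).1, le_refl _⟩
      rw [hstep k]; linarith
    · rw [hstep k]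
      rcases le_or_gt (f k) 0 with hfk | hfk
      · have : f k * t k ≤ 0 := mul_nonpos_of_nonpos_of_nonneg hfk (ht k).1
        linarith [ih.2]
      · have h1 : f k * t k ≤ f k * ε := by
          exact mul_le_mul_of_nonneg_left (ht k).2 hfk.le
        have h2 : f k * ε ≤ M - x k := by
          have := hf k
          calc f k * ε ≤ (M - x k) / ε * ε := by nlinarith
            _ = M - x k := by field_simp
        linarith
end

section
/- Let B > 0, A ≥ 0, ε > 0 and v ≥ 0 be real numbers. Suppose a and t satisfy −B ≤ a ≤ A, 0 ≤ t ≤ ε and v + a·t ≥ 0. If real numbers xr, xo satisfy xo − xr > v²/(2·B) + (A/B + 1)·(A·ε²/2 + ε·v), then xo − (xr + v·t + a·t²/2) > (v + a·t)²/(2·B). -/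
theorem acceleration_preserves_braking_invariant
    (B A ε v a t xr xo : ℝ)
    (hB : B > 0) (hA : A ≥ 0) (hε : ε > 0) (hv : v ≥ 0)
    (ha1 : -B ≤ a) (ha2 : a ≤ A) (ht1 : 0 ≤ t) (ht2 : t ≤ ε)
    (hvt : v + a * t ≥ 0)
    (hsafe : xo - xr > v ^ 2 / (2 * B) + (A / B + 1) * (A * ε ^ 2 / 2 + ε * v)) :
    xo - (xr + v * t + a * t ^ 2 / 2) > (v + a * t) ^ 2 / (2 * B) := by
  rw [gt_iff_lt, div_lt_iff₀ (by linarith : (0:ℝ) < 2 * B)]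
  rw [gt_iff_lt, div_add' _ _ _ (by linarith : (2*B) ≠ 0), div_lt_iff₀ (by linarith : (0:ℝ) < 2 * B)] at hsafe
  have hkey : (A / B + 1) * (A * ε ^ 2 / 2 + ε * v) * (2 * B) = (A + B) * (A * ε ^ 2 + 2 * ε * v) := by
    field_simp
  rw [hkey] at hsafe
  have h1 : t ^ 2 * (a * (a + B)) ≤ ε ^ 2 * (A * (A + B)) := by
    rcases le_or_gt a 0 with h | h
    · have : a * (a + B) ≤ 0 := mul_nonpos_of_nonpos_of_nonneg h (by linarith)
      nlinarith [sq_nonneg t, sq_nonneg ε, mul_nonneg hA (by linarith : (0:ℝ) ≤ A + B)]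
    · have h3 : a * (a + B) ≤ A * (A + B) := by nlinarith
      have h4 : t ^ 2 ≤ ε ^ 2 := by nlinarith
      have h5 : 0 ≤ a * (a + B) := by positivity
      nlinarith [sq_nonneg t]
  have h2 : v * t * (a + B) ≤ v * ε * (A + B) := by
    have := mul_le_mul (mul_le_mul_of_nonneg_left ht2 hv) (by linarith : a + B ≤ A + B) (by linarith) (mul_nonneg hv hε.le)
    linarith
  nlinarith [h1, h2]
end

section
/- Let B > 0, V ≥ 0, v ≥ 0 and t ≥ 0 be real numbers with v − B·t ≥ 0, let or be a real number with or² = 1, and let δ be a real number with |δ| ≤ V·t. If real numbers xr, xo satisfy |xr − xo| ≥ v²/(2·B) + v·V/B, then |(xr + or·(v·t − B·t²/2)) − (xo + δ)| ≥ (v − B·t)²/(2·B) + (v − B·t)·V/B. -/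
theorem braking_preserves_stoppable
    (B V v t orr δ xr xo : ℝ)
    (hB : B > 0) (hV : V ≥ 0) (hv : v ≥ 0) (ht : t ≥ 0)
    (hvt : v - B * t ≥ 0) (hor : orr ^ 2 = 1) (hδ : |δ| ≤ V * t)
    (hinv : |xr - xo| ≥ v ^ 2 / (2 * B) + v * V / B) :
    |(xr + orr * (v * t - B * t ^ 2 / 2)) - (xo + δ)| ≥
      (v - B * t) ^ 2 / (2 * B) + (v - B * t) * V / B := by
  have hδ' := abs_le.mp hδ
  have hm : v * t - B * t ^ 2 / 2 ≥ 0 := by nlinarith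
  have key : v ^ 2 / (2 * B) + v * V / B =
      ((v - B * t) ^ 2 / (2 * B) + (v - B * t) * V / B)
        + (v * t - B * t ^ 2 / 2 + V * t) := by
    field_simp
    ring
  rw [key] at hinv
  have hor' : orr = 1 ∨ orr = -1 := by
    rcases mul_eq_zero.mp (show (orr - 1) * (orr + 1) = 0 by nlinarith) with h | h
    · left; linarith
    · right; linarith
  rcases abs_cases (xr - xo) with ⟨h1, h2⟩ | ⟨h1, h2⟩ <;>
    rcases hor' with h | h <;>
    rw [ge_iff_le, le_abs] <;>
    [skip; skip; (right); (right)] <;>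
    first
      | (left; subst h; linarith)
      | (right; subst h; linarith)
      | (subst h; linarith)
end

section
/- Let B > 0, A ≥ 0, V ≥ 0, ε > 0 and v ≥ 0 be real numbers, let a and t satisfy −B ≤ a ≤ A, 0 ≤ t ≤ ε and v + a·t ≥ 0, let or be a real number with or² = 1, and let δ be a real number with |δ| ≤ V·t. If real numbers xr, xo satisfy |xr − xo| ≥ v²/(2·B) + (A/B + 1)·(A·ε²/2 + ε·v) + V·(ε + (v + A·ε)/B), then |(xr + or·(v·t + a·t²/2)) − (xo + δ)| ≥ (v + a·t)²/(2·B) + (v + a·t)·V/B. -/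
set_option maxHeartbeats 800000


theorem acceleration_preserves_stoppable
    (B A V ε v a t orr δ xr xo : ℝ)
    (hB : B > 0) (hA : A ≥ 0) (hV : V ≥ 0) (hε : ε > 0) (hv : v ≥ 0)
    (ha1 : -B ≤ a) (ha2 : a ≤ A) (ht1 : 0 ≤ t) (ht2 : t ≤ ε)
    (hvt : v + a * t ≥ 0) (hor : orr ^ 2 = 1) (hδ : |δ| ≤ V * t)
    (hsafe : |xr - xo| ≥ v ^ 2 / (2 * B) + (A / B + 1) * (A * ε ^ 2 / 2 + ε * v) +
      V * (ε + (v + A * ε) / B)) :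
    |(xr + orr * (v * t + a * t ^ 2 / 2)) - (xo + δ)| ≥
      (v + a * t) ^ 2 / (2 * B) + (v + a * t) * V / B := by
  have habs : |orr| = 1 := by
    have h := sq_abs orr
    nlinarith [abs_nonneg orr]
  have hd : 0 ≤ v * t + a * t ^ 2 / 2 := by nlinarith
  set d := v * t + a * t ^ 2 / 2 with hdef
  have hod : |orr * d| = d := by rw [abs_mul, habs, one_mul, abs_of_nonneg hd]
  set D := xr - xo with hD
  set E := orr * d - δ with hE
  have h1 : |D| - |E| ≤ |D + E| := by
    have h := abs_add_le (D + E) (-E)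
    simp only [add_neg_cancel_right, abs_neg] at h
    linarith
  have hEb : |E| ≤ d + V * t := by
    calc |E| = |orr * d + -δ| := by rw [hE]; ring_nf
    _ ≤ |orr * d| + |(-δ)| := abs_add_le _ _
    _ = d + |δ| := by rw [hod, abs_neg]
    _ ≤ d + V * t := by linarith
  have hgoal : xr + orr * d - (xo + δ) = D + E := by rw [hD, hE]; ring
  rw [hgoal]
  have hat : a * t ≤ A * ε := by nlinarith
  have hsum : (0:ℝ) ≤ 2 * v + A * ε + a * t := by nlinarith
  have hprod := mul_nonneg (sub_nonneg.mpr hat) hsum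
  have hid : v ^ 2 + A * ε * (2 * v + A * ε) - (v + a * t) ^ 2 =
      (A * ε - a * t) * (2 * v + A * ε + a * t) := by ring
  have hnum : (v + a * t) ^ 2 ≤ v ^ 2 + A * ε * (2 * v + A * ε) := by linarith
  have e1 : (v + a * t) ^ 2 / (2 * B) ≤ (v ^ 2 + A * ε * (2 * v + A * ε)) / (2 * B) := by
    apply div_le_div_of_nonneg_right hnum
    positivity
  have hnum2 : (v + a * t) * V ≤ (v + A * ε) * V := by nlinarith
  have e2 : (v + a * t) * V / B ≤ (v + A * ε) * V / B := by
    apply div_le_div_of_nonneg_right hnum2 hB.le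
  have e3 : (A / B + 1) * (A * ε ^ 2 / 2 + ε * v) =
      A * ε * (2 * v + A * ε) / (2 * B) + (v * ε + A * ε ^ 2 / 2) := by
    field_simp
    ring
  have e4 : V * (ε + (v + A * ε) / B) = V * ε + (v + A * ε) * V / B := by
    field_simp
  have e5 : v ^ 2 / (2 * B) + A * ε * (2 * v + A * ε) / (2 * B) =
      (v ^ 2 + A * ε * (2 * v + A * ε)) / (2 * B) := by ring
  have hdle : d ≤ v * ε + A * ε ^ 2 / 2 := by rw [hdef]; nlinarith
  have hVt : V * t ≤ V * ε := by nlinarith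
  clear_value d D E
  linarith [hsafe, hEb, h1, e1, e2, hdle, hVt]
end

section
/- Let B > 0, A ≥ 0, ε > 0 and v ≥ 0 be real numbers, let o be a real number with o² = 1, and let a, t satisfy −B ≤ a ≤ A, 0 ≤ t ≤ ε and v + a·t ≥ 0. Set K = (A/B + 1)·(A·ε²/2 + ε·v), x' = x + o·(v·t + a·t²/2) and v' = v + a·t. If real numbers xlb, x, xub satisfy xlb + ((1 − o)/2)·(v²/(2·B) + K) < x < xub − ((1 + o)/2)·(v²/(2·B) + K), then xlb + ((1 − o)/2)·v'²/(2·B) < x' < xub − ((1 + o)/2)·v'²/(2·B). -/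
lemma key (B A ε v a t : ℝ)
    (hB : B > 0) (hA : A ≥ 0) (hε : ε > 0) (hv : v ≥ 0)
    (ha1 : -B ≤ a) (ha2 : a ≤ A) (ht1 : 0 ≤ t) (ht2 : t ≤ ε)
    (hvt : v + a * t ≥ 0) :
    (v * t + a * t ^ 2 / 2) + (v + a * t) ^ 2 / (2 * B)
      ≤ v ^ 2 / (2 * B) + (A / B + 1) * (A * ε ^ 2 / 2 + ε * v) := by
  have hat : a * t ≤ A * ε := by nlinarith
  have h1 : (A * ε - a * t) * (2 * v + a * t) ≥ 0 := by
    have : 2 * v + a * t = v + (v + a * t) := by ring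
    nlinarith
  have h2 : A * ε * (A * ε - a * t) ≥ 0 :=
    mul_nonneg (mul_nonneg hA hε.le) (sub_nonneg.2 hat)
  have h3 : B * ((ε - t) * v) ≥ 0 :=
    mul_nonneg hB.le (mul_nonneg (by linarith) hv)
  have h4 : B * ((A - a) * t ^ 2) ≥ 0 :=
    mul_nonneg hB.le (mul_nonneg (by linarith) (sq_nonneg t))
  have h5 : B * (A * ((ε - t) * (ε + t))) ≥ 0 :=
    mul_nonneg hB.le (mul_nonneg hA (mul_nonneg (by linarith) (by linarith)))
  have main : 2 * B * (v * t + a * t ^ 2 / 2) + (v + a * t) ^ 2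
      ≤ v ^ 2 + (A + B) * (A * ε ^ 2 + 2 * ε * v) := by nlinarith
  have hL : v * t + a * t ^ 2 / 2 + (v + a * t) ^ 2 / (2 * B)
      = (2 * B * (v * t + a * t ^ 2 / 2) + (v + a * t) ^ 2) / (2 * B) := by
    field_simp
  have hR : v ^ 2 / (2 * B) + (A / B + 1) * (A * ε ^ 2 / 2 + ε * v)
      = (v ^ 2 + (A + B) * (A * ε ^ 2 + 2 * ε * v)) / (2 * B) := by
    field_simp
  rw [hL, hR]
  exact div_le_div_of_nonneg_right main (by positivity)

theorem acceleration_preserves_bounds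
    (B A ε v o a t xlb x xub : ℝ)
    (hB : B > 0) (hA : A ≥ 0) (hε : ε > 0) (hv : v ≥ 0) (ho : o ^ 2 = 1)
    (ha1 : -B ≤ a) (ha2 : a ≤ A) (ht1 : 0 ≤ t) (ht2 : t ≤ ε)
    (hvt : v + a * t ≥ 0)
    (hlo : xlb + ((1 - o) / 2) * (v ^ 2 / (2 * B) + (A / B + 1) * (A * ε ^ 2 / 2 + ε * v)) < x)
    (hhi : x < xub - ((1 + o) / 2) * (v ^ 2 / (2 * B) + (A / B + 1) * (A * ε ^ 2 / 2 + ε * v))) :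
    xlb + ((1 - o) / 2) * (v + a * t) ^ 2 / (2 * B) < x + o * (v * t + a * t ^ 2 / 2) ∧
      x + o * (v * t + a * t ^ 2 / 2) < xub - ((1 + o) / 2) * (v + a * t) ^ 2 / (2 * B) := by
  have hkey := key B A ε v a t hB hA hε hv ha1 ha2 ht1 ht2 hvt
  have hd : v * t + a * t ^ 2 / 2 ≥ 0 := by
    nlinarith [mul_nonneg ht1 hvt, mul_nonneg ht1 hv]
  have hsq : (v + a * t) ^ 2 / (2 * B) ≥ 0 := by positivity
  have hcase : o = 1 ∨ o = -1 := by
    rcases mul_eq_zero.1 (show (o - 1) * (o + 1) = 0 by nlinarith) with h | h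
    · left; linarith
    · right; linarith
  rcases hcase with h | h <;> subst h <;> constructor <;> [skip; skip; skip; skip] <;>
    norm_num at hlo hhi ⊢ <;> linarith
end

section
/- Let B > 0 and v ≥ 0 be real numbers, let o be a real number with o² = 1, and let t ≥ 0 satisfy v − B·t ≥ 0. Set x' = x + o·(v·t − B·t²/2) and v' = v − B·t. If real numbers xlb, x, xub satisfy xlb + ((1 − o)/2)·v²/(2·B) < x < xub − ((1 + o)/2)·v²/(2·B), then xlb + ((1 − o)/2)·v'²/(2·B) < x' < xub − ((1 + o)/2)·v'²/(2·B). -/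
theorem braking_preserves_bounds
    (B v o t xlb x xub : ℝ)
    (hB : B > 0) (hv : v ≥ 0) (ho : o ^ 2 = 1) (ht : t ≥ 0)
    (hvt : v - B * t ≥ 0)
    (hlo : xlb + ((1 - o) / 2) * v ^ 2 / (2 * B) < x)
    (hhi : x < xub - ((1 + o) / 2) * v ^ 2 / (2 * B)) :
    xlb + ((1 - o) / 2) * (v - B * t) ^ 2 / (2 * B) < x + o * (v * t - B * t ^ 2 / 2) ∧
      x + o * (v * t - B * t ^ 2 / 2) < xub - ((1 + o) / 2) * (v - B * t) ^ 2 / (2 * B) := by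
  have h1 : (o - 1) * (o + 1) = 0 := by nlinarith
  have hdist : v * t - B * t ^ 2 / 2 ≥ 0 := by nlinarith
  rcases mul_eq_zero.mp h1 with h | h
  · have ho1 : o = 1 := by linarith
    subst ho1
    constructor
    · have e : ((1 - 1) / 2) * (v - B * t) ^ 2 / (2 * B) = 0 := by ring
      rw [e]
      have e2 : xlb + ((1 - 1) / 2) * v ^ 2 / (2 * B) = xlb := by ring
      rw [e2] at hlo
      nlinarith
    · have key : ((1 + 1) / 2) * (v - B * t) ^ 2 / (2 * B) =
        ((1 + 1) / 2) * v ^ 2 / (2 * B) - (v * t - B * t ^ 2 / 2) := by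
        field_simp; ring
      rw [key]; linarith
  · have ho1 : o = -1 := by linarith
    subst ho1
    constructor
    · have key : ((1 - (-1)) / 2) * (v - B * t) ^ 2 / (2 * B) =
        ((1 - (-1)) / 2) * v ^ 2 / (2 * B) - (v * t - B * t ^ 2 / 2) := by
        field_simp; ring
      rw [key]; linarith
    · have e : ((1 + -1) / 2) * (v - B * t) ^ 2 / (2 * B) = 0 := by ring
      rw [e]
      have e2 : xub - ((1 + -1) / 2) * v ^ 2 / (2 * B) = xub := by ring
      rw [e2] at hhi
      nlinarith
end

section
/- Fix real numbers A ≥ 0, B > 0, ε > 0, V ≥ 0 and xlb < xub. A state is a tuple (xr, vr, or, xo, vo, oo) of reals. One loop iteration of the single-wheel-drive model transforms a state as follows. Control step: the robot chooses (ar, or₁) by one of: (i) brake: ar = −B, or₁ = or; (ii) accelerate: possible only if the safe condition holds, namely xlb + ((1 − or)/2)·(vr²/(2B) + K) < xr < xub − ((1 + or)/2)·(vr²/(2B) + K) and |xr − xo| ≥ vr²/(2B) + K + V·(ε + (vr + A·ε)/B), where K = (A/B + 1)·(A·ε²/2 + ε·vr), and then any ar with −B ≤ ar ≤ A, or₁ =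 or; (iii) stay: possible only if vr = 0, with ar = 0 and any or₁ with or₁² = 1. Simultaneously the obstacle chooses (vo₁, oo₁) by one of: (a) possible only if vo = 0: vo₁ = 0 and any oo₁ with oo₁² = 1; (b) oo₁ = oo and any vo₁ with 0 ≤ vo₁ ≤ V. Dynamics step: choose any t with 0 ≤ t ≤ ε and vr + ar·s ≥ 0 for all s ∈ [0, t], and pass to the state (xr + or₁·(vr·t + ar·t²/2), vr + ar·t, or₁, xo + oo₁·vo₁·t, vo₁, oo₁). Call a state reachable from an initial state if it arises after finitely many loop iterations. Theorem: if the initial state satisfies |xr − xo| ≥ vr²/(2B) + vr·V/B, xlb + ((1 − or)/2)·vr²/(2B) < xr < xub − ((1 + or)/2)·vr²/(2B), vr ≥ 0, or² = 1, oo² = 1 and 0 ≤ vo ≤ V, then every reachable state satisfies the safety condition: (vr > 0 → |xr − xo| > 0) and xlb < xr < xub. -/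
/-- State of the single-wheel-drive model: robot position, speed, orientation,
obstacle position, speed, orientation. -/
structure SWDState where
  xr : ℝ
  vr : ℝ
  orr : ℝ
  xo : ℝ
  vo : ℝ
  oo : ℝ

/-- Acceleration compensation term. -/
noncomputable def swdK (A B ε vr : ℝ) : ℝ := (A / B + 1) * (A * ε ^ 2 / 2 + ε * vr)

/-- One loop iteration (control followed by dynamics) of the single-wheel-drive model. -/
def SWDStep (A B ε V xlb xub : ℝ) (s s' : SWDState) : Prop :=
  ∃ ar or₁ vo₁ oo₁ t : ℝ,
    -- robot control: brake, or accelerate when safe, or stay when stopped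
    (((ar = -B ∧ or₁ = s.orr) ∨
      ((xlb + ((1 - s.orr) / 2) * (s.vr ^ 2 / (2 * B) + swdK A B ε s.vr) < s.xr ∧
        s.xr < xub - ((1 + s.orr) / 2) * (s.vr ^ 2 / (2 * B) + swdK A B ε s.vr) ∧
        |s.xr - s.xo| ≥ s.vr ^ 2 / (2 * B) + swdK A B ε s.vr + V * (ε + (s.vr + A * ε) / B)) ∧
       (-B ≤ ar ∧ ar ≤ A) ∧ or₁ = s.orr) ∨
      (s.vr = 0 ∧ ar = 0 ∧ or₁ ^ 2 = 1))) ∧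
    -- obstacle control: turn when stopped, or keep orientation with any speed up to V
    ((s.vo = 0 ∧ vo₁ = 0 ∧ oo₁ ^ 2 = 1) ∨ (oo₁ = s.oo ∧ 0 ≤ vo₁ ∧ vo₁ ≤ V)) ∧
    -- dynamics for any duration t within the control cycle and evolution domain
    (0 ≤ t ∧ t ≤ ε ∧ (∀ u ∈ Set.Icc (0 : ℝ) t, s.vr + ar * u ≥ 0)) ∧
    s' = ⟨s.xr + or₁ * (s.vr * t + ar * t ^ 2 / 2), s.vr + ar * t, or₁,
          s.xo + oo₁ * vo₁ * t, vo₁, oo₁⟩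

/-- Reachability: a state arises from the initial state after finitely many loop iterations. -/
def SWDReachable (A B ε V xlb xub : ℝ) (s0 s : SWDState) : Prop :=
  Relation.ReflTransGen (SWDStep A B ε V xlb xub) s0 s
set_option maxHeartbeats 1000000 in
private lemma swd_sq1 {a : ℝ} (h : a ^ 2 = 1) : a = 1 ∨ a = -1 := by
  have h0 : (a - 1) * (a + 1) = 0 := by linear_combination h
  rcases mul_eq_zero.mp h0 with h' | h'
  · exact Or.inl (by linarith)
  · exact Or.inr (by linarith)

/-- Loop invariant for the single-wheel-drive model, with divisions cleared. -/
def SWDInv (B V xlb xub : ℝ) (s : SWDState) : Prop :=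
  0 ≤ s.vr ∧ s.orr ^ 2 = 1 ∧ s.oo ^ 2 = 1 ∧ 0 ≤ s.vo ∧ s.vo ≤ V ∧
  s.vr ^ 2 + 2 * s.vr * V ≤ 2 * B * |s.xr - s.xo| ∧
  2 * B * xlb + ((1 - s.orr) / 2) * s.vr ^ 2 < 2 * B * s.xr ∧
  2 * B * s.xr < 2 * B * xub - ((1 + s.orr) / 2) * s.vr ^ 2

set_option maxHeartbeats 1600000 in
lemma swd_step_inv (A B ε V xlb xub : ℝ) (hA : 0 ≤ A) (hB : 0 < B) (hε : 0 < ε)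
    (hV : 0 ≤ V) {s s' : SWDState} (hI : SWDInv B V xlb xub s)
    (hstep : SWDStep A B ε V xlb xub s s') : SWDInv B V xlb xub s' := by
  have hBne : B ≠ 0 := ne_of_gt hB
  have h2B : (0:ℝ) < 2 * B := by linarith
  obtain ⟨x, v, o, y, w, p⟩ := s
  obtain ⟨hv, ho, hp, hw0, hwV, hdist, hlo, hhi⟩ := hI
  obtain ⟨ar, or₁, vo₁, oo₁, t, hctl, hobs, ⟨ht0, htε, hdom⟩, rfl⟩ := hstep
  dsimp only at hv ho hp hw0 hwV hdist hlo hhi hctl hobs hdom ⊢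
  have hvt : 0 ≤ v + ar * t := hdom t (Set.mem_Icc.mpr ⟨ht0, le_refl t⟩)
  have hoo₁ : oo₁ ^ 2 = 1 := by
    rcases hobs with ⟨_, _, h⟩ | ⟨h, _, _⟩
    · exact h
    · rw [h]; exact hp
  have hvo₁0 : 0 ≤ vo₁ := by
    rcases hobs with ⟨_, h, _⟩ | ⟨_, h, _⟩
    · rw [h]
    · exact h
  have hvo₁V : vo₁ ≤ V := by
    rcases hobs with ⟨_, h, _⟩ | ⟨_, _, h⟩
    · rw [h]; exact hV
    · exact h
  have habsoo : |oo₁| = 1 := by rcases swd_sq1 hoo₁ with h | h <;> rw [h] <;> norm_num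
  have hor₁ : or₁ ^ 2 = 1 := by
    rcases hctl with ⟨_, h⟩ | ⟨_, _, h⟩ | ⟨_, _, h⟩
    · rw [h]; exact ho
    · rw [h]; exact ho
    · exact h
  have habsor : |or₁| = 1 := by rcases swd_sq1 hor₁ with h | h <;> rw [h] <;> norm_num
  have hd0 : 0 ≤ v * t + ar * t ^ 2 / 2 := by
    nlinarith [mul_nonneg hv ht0, mul_nonneg hvt ht0]
  have htri : |x - y| - (v * t + ar * t ^ 2 / 2) - V * t
      ≤ |x + or₁ * (v * t + ar * t ^ 2 / 2) - (y + oo₁ * vo₁ * t)| := by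
    have h1 := abs_sub_abs_le_abs_sub (x - y)
      (x + or₁ * (v * t + ar * t ^ 2 / 2) - (y + oo₁ * vo₁ * t))
    have e : x - y - (x + or₁ * (v * t + ar * t ^ 2 / 2) - (y + oo₁ * vo₁ * t))
        = oo₁ * vo₁ * t - or₁ * (v * t + ar * t ^ 2 / 2) := by ring
    rw [e] at h1
    have h2 : |oo₁ * vo₁ * t - or₁ * (v * t + ar * t ^ 2 / 2)|
        ≤ |oo₁ * vo₁ * t| + |or₁ * (v * t + ar * t ^ 2 / 2)| := abs_sub _ _
    have h3 : |or₁ * (v * t + ar * t ^ 2 / 2)| = v * t + ar * t ^ 2 / 2 := by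
      rw [abs_mul, habsor, one_mul, abs_of_nonneg hd0]
    have h4 : |oo₁ * vo₁ * t| ≤ V * t := by
      rw [abs_mul, abs_mul, habsoo, one_mul, abs_of_nonneg hvo₁0, abs_of_nonneg ht0]
      exact mul_le_mul_of_nonneg_right hvo₁V ht0
    linarith
  have htB := mul_le_mul_of_nonneg_left htri h2B.le
  have hXnn : 0 ≤ 2 * B * |x + or₁ * (v * t + ar * t ^ 2 / 2) - (y + oo₁ * vo₁ * t)| :=
    mul_nonneg h2B.le (abs_nonneg _)
  have hmain : (v + ar * t) ^ 2 + 2 * (v + ar * t) * V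
        ≤ 2 * B * |x + or₁ * (v * t + ar * t ^ 2 / 2) - (y + oo₁ * vo₁ * t)| ∧
      2 * B * xlb + ((1 - or₁) / 2) * (v + ar * t) ^ 2
        < 2 * B * (x + or₁ * (v * t + ar * t ^ 2 / 2)) ∧
      2 * B * (x + or₁ * (v * t + ar * t ^ 2 / 2))
        < 2 * B * xub - ((1 + or₁) / 2) * (v + ar * t) ^ 2 := by
    rcases hctl with ⟨har, hor'⟩ | ⟨⟨hsl, hsu, hsd⟩, ⟨harl, haru⟩, hor'⟩ | ⟨hv0, har, _⟩
    · -- braking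
      subst har; subst hor'
      refine ⟨by linarith [htB, hdist], ?_, ?_⟩
      · rcases swd_sq1 ho with h1 | h1 <;> subst h1 <;>
          linarith [hlo, mul_nonneg h2B.le hd0]
      · rcases swd_sq1 ho with h1 | h1 <;> subst h1 <;>
          linarith [hhi, mul_nonneg h2B.le hd0]
    · -- accelerating under the safety condition
      subst hor'
      have hart : ar * t ≤ A * ε := by
        linarith [mul_nonneg (sub_nonneg.mpr haru) ht0, mul_nonneg hA (sub_nonneg.mpr htε)]
      have hdub : v * t + ar * t ^ 2 / 2 ≤ v * ε + A * ε ^ 2 / 2 := by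
        linarith [mul_nonneg hv (sub_nonneg.mpr htε),
          mul_nonneg (sub_nonneg.mpr hart) ht0,
          mul_nonneg (mul_nonneg hA hε.le) (sub_nonneg.mpr htε)]
      have hv'ub : v + ar * t ≤ v + A * ε := by linarith
      have hsdm := mul_le_mul_of_nonneg_left hsd h2B.le
      have hsde : 2 * B * (v ^ 2 / (2 * B) + swdK A B ε v + V * (ε + (v + A * ε) / B))
          = v ^ 2 + (A + B) * (A * ε ^ 2 + 2 * ε * v) + 2 * B * V * ε
            + 2 * V * (v + A * ε) := by
        rw [swdK]; field_simp; ring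
      have hslm := mul_lt_mul_of_pos_left hsl h2B
      have hsle : 2 * B * (xlb + (1 - or₁) / 2 * (v ^ 2 / (2 * B) + swdK A B ε v))
          = 2 * B * xlb + (1 - or₁) / 2 * (v ^ 2 + (A + B) * (A * ε ^ 2 + 2 * ε * v)) := by
        rw [swdK]; field_simp
      have hsum := mul_lt_mul_of_pos_left hsu h2B
      have hsue : 2 * B * (xub - (1 + or₁) / 2 * (v ^ 2 / (2 * B) + swdK A B ε v))
          = 2 * B * xub - (1 + or₁) / 2 * (v ^ 2 + (A + B) * (A * ε ^ 2 + 2 * ε * v)) := by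
        rw [swdK]; field_simp
      refine ⟨?_, ?_, ?_⟩
      · linarith [htB, hsdm, hsde, mul_le_mul_of_nonneg_left hdub h2B.le,
          mul_le_mul_of_nonneg_left (mul_le_mul_of_nonneg_left htε hV) h2B.le,
          mul_nonneg (sub_nonneg.mpr hv'ub) (by linarith : (0:ℝ) ≤ (v + A * ε) + (v + ar * t)),
          mul_nonneg hV (sub_nonneg.mpr hv'ub)]
      · rcases swd_sq1 ho with h1 | h1 <;> subst h1 <;>
          linarith [hslm, hsle, mul_nonneg h2B.le hd0,
            mul_le_mul_of_nonneg_left hdub h2B.le,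
            mul_nonneg (sub_nonneg.mpr hv'ub) (by linarith : (0:ℝ) ≤ (v + A * ε) + (v + ar * t))]
      · rcases swd_sq1 ho with h1 | h1 <;> subst h1 <;>
          linarith [hsum, hsue, mul_nonneg h2B.le hd0,
            mul_le_mul_of_nonneg_left hdub h2B.le,
            mul_nonneg (sub_nonneg.mpr hv'ub) (by linarith : (0:ℝ) ≤ (v + A * ε) + (v + ar * t))]
    · -- staying stopped
      subst hv0; subst har
      refine ⟨by linarith [hXnn], by linarith [hlo], by linarith [hhi]⟩
  exact ⟨hvt, hor₁, hoo₁, hvo₁0, hvo₁V, hmain.1, hmain.2.1, hmain.2.2⟩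

set_option maxHeartbeats 1600000 in
theorem swd_safety
    (A B ε V xlb xub : ℝ)
    (hA : A ≥ 0) (hB : B > 0) (hε : ε > 0) (hV : V ≥ 0) (hbounds : xlb < xub)
    (s0 : SWDState)
    (hdist : |s0.xr - s0.xo| ≥ s0.vr ^ 2 / (2 * B) + s0.vr * V / B)
    (hlo : xlb + ((1 - s0.orr) / 2) * s0.vr ^ 2 / (2 * B) < s0.xr)
    (hhi : s0.xr < xub - ((1 + s0.orr) / 2) * s0.vr ^ 2 / (2 * B))
    (hvr : s0.vr ≥ 0) (hor : s0.orr ^ 2 = 1) (hoo : s0.oo ^ 2 = 1)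
    (hvo : 0 ≤ s0.vo ∧ s0.vo ≤ V) :
    ∀ s : SWDState, SWDReachable A B ε V xlb xub s0 s →
      (s.vr > 0 → |s.xr - s.xo| > 0) ∧ xlb < s.xr ∧ s.xr < xub := by
  have hBne : B ≠ 0 := ne_of_gt hB
  have h2B : (0:ℝ) < 2 * B := by linarith
  have hI0 : SWDInv B V xlb xub s0 := by
    refine ⟨hvr, hor, hoo, hvo.1, hvo.2, ?_, ?_, ?_⟩
    · have h := mul_le_mul_of_nonneg_left hdist h2B.le
      have e : 2 * B * (s0.vr ^ 2 / (2 * B) + s0.vr * V / B)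
          = s0.vr ^ 2 + 2 * s0.vr * V := by field_simp
      linarith
    · have h := mul_lt_mul_of_pos_left hlo h2B
      have e : 2 * B * (xlb + (1 - s0.orr) / 2 * s0.vr ^ 2 / (2 * B))
          = 2 * B * xlb + (1 - s0.orr) / 2 * s0.vr ^ 2 := by field_simp
      linarith
    · have h := mul_lt_mul_of_pos_left hhi h2B
      have e : 2 * B * (xub - (1 + s0.orr) / 2 * s0.vr ^ 2 / (2 * B))
          = 2 * B * xub - (1 + s0.orr) / 2 * s0.vr ^ 2 := by field_simp
      linarith
  intro s hreach
  have hI : SWDInv B V xlb xub s := by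
    induction hreach with
    | refl => exact hI0
    | tail _ hstep ih => exact swd_step_inv A B ε V xlb xub hA hB hε hV ih hstep
  obtain ⟨hv, ho, _, _, _, hdist', hlo', hhi'⟩ := hI
  refine ⟨?_, ?_, ?_⟩
  · intro hvpos
    nlinarith [hdist', mul_pos hvpos hvpos, mul_nonneg hvpos.le hV]
  · rcases swd_sq1 ho with h | h <;> rw [h] at hlo' <;> nlinarith [hlo', sq_nonneg s.vr]
  · rcases swd_sq1 ho with h | h <;> rw [h] at hhi' <;> nlinarith [hhi', sq_nonneg s.vr]
end

section
/- Let r be a nonzero real number and let x, y, v, dx, dy : ℝ → ℝ be functions such that for every t ∈ ℝ, x has derivative v(t)·dx(t), y has derivative v(t)·dy(t), dx has derivative −(v(t)·dy(t))/r, and dy has derivative (v(t)·dx(t))/r at t. Then x(t) − r·dy(t) = x(0) − r·dy(0) and y(t) + r·dx(t) = y(0) + r·dx(0) for all t; consequently, if dx(0)² + dy(0)² = 1, then (x(t) − (x(0) − r·dy(0)))² + (y(t) − (y(0) + r·dx(0)))² = r² for all t, i.e., the robot moves on the circle of radius |r| about the fixed center (x(0) − r·dy(0), y(0) + r·dx(0)).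 -/
theorem circular_motion_fixed_center
    (r : ℝ) (hr : r ≠ 0) (x y v dx dy : ℝ → ℝ)
    (hx : ∀ t : ℝ, HasDerivAt x (v t * dx t) t)
    (hy : ∀ t : ℝ, HasDerivAt y (v t * dy t) t)
    (hdx : ∀ t : ℝ, HasDerivAt dx (-(v t * dy t) / r) t)
    (hdy : ∀ t : ℝ, HasDerivAt dy ((v t * dx t) / r) t) :
    (∀ t : ℝ, x t - r * dy t = x 0 - r * dy 0 ∧ y t + r * dx t = y 0 + r * dx 0) ∧
      (dx 0 ^ 2 + dy 0 ^ 2 = 1 →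
        ∀ t : ℝ, (x t - (x 0 - r * dy 0)) ^ 2 + (y t - (y 0 + r * dx 0)) ^ 2 = r ^ 2) := by
  have h1 : ∀ t : ℝ, x t - r * dy t = x 0 - r * dy 0 := by
    intro t
    have hd : ∀ s : ℝ, HasDerivAt (fun u => x u - r * dy u) 0 s := by
      intro s
      have := (hx s).sub (((hdy s).const_mul r))
      convert this using 1
      all_goals try rfl
      field_simp
      ring
    exact is_const_of_deriv_eq_zero (fun s => (hd s).differentiableAt)
      (fun s => (hd s).deriv) t 0
  have h2 : ∀ t : ℝ, y t + r * dx t = y 0 + r * dx 0 := by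
    intro t
    have hd : ∀ s : ℝ, HasDerivAt (fun u => y u + r * dx u) 0 s := by
      intro s
      have := (hy s).add (((hdx s).const_mul r))
      convert this using 1
      all_goals try rfl
      field_simp
      ring
    exact is_const_of_deriv_eq_zero (fun s => (hd s).differentiableAt)
      (fun s => (hd s).deriv) t 0
  have h3 : ∀ t : ℝ, dx t ^ 2 + dy t ^ 2 = dx 0 ^ 2 + dy 0 ^ 2 := by
    intro t
    have hd : ∀ s : ℝ, HasDerivAt (fun u => dx u ^ 2 + dy u ^ 2) 0 s := by
      intro s
      have := (((hdx s).pow 2).add ((hdy s).pow 2))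
      convert this using 1
      all_goals try rfl
      field_simp
      ring
    exact is_const_of_deriv_eq_zero (fun s => (hd s).differentiableAt)
      (fun s => (hd s).deriv) t 0
  refine ⟨fun t => ⟨h1 t, h2 t⟩, fun hinit t => ?_⟩
  have e1 : x t - (x 0 - r * dy 0) = r * dy t := by
    have := h1 t; linarith
  have e2 : y t - (y 0 + r * dx 0) = -(r * dx t) := by
    have := h2 t; linarith
  rw [e1, e2]
  have := h3 t
  rw [hinit] at this
  nlinarith [this]
end

section
/- Let B > 0 and v0 ≥ 0 be real numbers, let p : ℝ → ℝ × ℝ be a function that is differentiable on [0, v0/B] with ‖p'(t)‖ ≤ v0 − B·t (Euclidean norm of the derivative) for every t ∈ [0, v0/B], and let po ∈ ℝ × ℝ be a point whose sup-norm distance to p(0) satisfies max(|p(0).1 − po.1|, |p(0).2 − po.2|) > v0²/(2·B). Then the Euclidean distance from p(t) to po is strictly positive for every t ∈ [0, v0/B]. -/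
theorem planar_braking_avoids_obstacle
    (B v0 : ℝ) (hB : B > 0) (hv0 : v0 ≥ 0)
    (p p' : ℝ → ℝ × ℝ)
    (hderiv : ∀ t ∈ Set.Icc (0 : ℝ) (v0 / B),
      HasDerivWithinAt p (p' t) (Set.Icc (0 : ℝ) (v0 / B)) t)
    (hspeed : ∀ t ∈ Set.Icc (0 : ℝ) (v0 / B),
      Real.sqrt ((p' t).1 ^ 2 + (p' t).2 ^ 2) ≤ v0 - B * t)
    (po : ℝ × ℝ)
    (hdist : max |(p 0).1 - po.1| |(p 0).2 - po.2| > v0 ^ 2 / (2 * B)) :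
    ∀ t ∈ Set.Icc (0 : ℝ) (v0 / B),
      Real.sqrt (((p t).1 - po.1) ^ 2 + ((p t).2 - po.2) ^ 2) > 0 := by
  intro t ht
  -- the bound function
  set g : ℝ → ℝ := fun s => v0 * s - B / 2 * s ^ 2 with hg
  have hcont : ContinuousOn (fun s => p s - p 0) (Set.Icc (0 : ℝ) (v0 / B)) := by
    intro x hx
    exact ((hderiv x hx).continuousWithinAt.sub continuousWithinAt_const)
  have hderiv' : ∀ x ∈ Set.Ico (0 : ℝ) (v0 / B),
      HasDerivWithinAt (fun s => p s - p 0) (p' x) (Set.Ici x) x := by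
    intro x hx
    have := (hderiv x (Set.mem_Icc_of_Ico hx)).sub_const (p 0)
    exact this.mono_of_mem_nhdsWithin (Icc_mem_nhdsGE_of_mem ⟨hx.1, hx.2⟩)
  have hBderiv : ∀ x : ℝ, HasDerivAt g (v0 - B * x) x := by
    intro x
    have h1 : HasDerivAt (fun s : ℝ => v0 * s) v0 x := by
      simpa using (hasDerivAt_id x).const_mul v0
    have h2 : HasDerivAt (fun s : ℝ => B / 2 * s ^ 2) (B / 2 * (2 * x)) x := by
      simpa using ((hasDerivAt_pow 2 x).const_mul (B / 2))
    have := h1.sub h2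
    rw [show v0 - B * x = v0 - B / 2 * (2 * x) by ring]
    exact this
  have hbound : ∀ x ∈ Set.Ico (0 : ℝ) (v0 / B), ‖p' x‖ ≤ v0 - B * x := by
    intro x hx
    have hs := hspeed x (Set.mem_Icc_of_Ico hx)
    have h1 : |(p' x).1| ≤ Real.sqrt ((p' x).1 ^ 2 + (p' x).2 ^ 2) := by
      rw [← Real.sqrt_sq_eq_abs]
      exact Real.sqrt_le_sqrt (by nlinarith [sq_nonneg (p' x).2])
    have h2 : |(p' x).2| ≤ Real.sqrt ((p' x).1 ^ 2 + (p' x).2 ^ 2) := by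
      rw [← Real.sqrt_sq_eq_abs]
      exact Real.sqrt_le_sqrt (by nlinarith [sq_nonneg (p' x).1])
    have : ‖p' x‖ = max |(p' x).1| |(p' x).2| := rfl
    rw [this]
    exact max_le (h1.trans hs) (h2.trans hs)
  have key : ‖p t - p 0‖ ≤ g t := by
    have ha : ‖p 0 - p 0‖ ≤ g 0 := by simp [hg]
    exact image_norm_le_of_norm_deriv_right_le_deriv_boundary hcont hderiv' ha hBderiv hbound ht
  have hgle : g t ≤ v0 ^ 2 / (2 * B) := by
    rcases ht with ⟨ht0, ht1⟩
    have htB : B * t ≤ v0 := by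
      have := mul_le_mul_of_nonneg_left ht1 hB.le
      rw [mul_div_cancel₀ _ hB.ne'] at this
      linarith
    rw [hg, le_div_iff₀ (by positivity)]
    simp only
    nlinarith [sq_nonneg (v0 - B * t)]
  -- sup-norm distance at time t is positive
  have hnorm : ‖p t - p 0‖ = max |(p t).1 - (p 0).1| |(p t).2 - (p 0).2| := rfl
  have hpos : max |(p t).1 - po.1| |(p t).2 - po.2| > 0 := by
    have htri : max |(p 0).1 - po.1| |(p 0).2 - po.2| ≤
        max |(p t).1 - po.1| |(p t).2 - po.2| +
        max |(p t).1 - (p 0).1| |(p t).2 - (p 0).2| := by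
      apply max_le
      · calc |(p 0).1 - po.1| ≤ |(p t).1 - po.1| + |(p t).1 - (p 0).1| := by
              have := abs_sub_abs_le_abs_sub ((p 0).1 - po.1) ((p t).1 - po.1)
              have h := abs_sub ((p 0).1 - po.1) ((p t).1 - po.1)
              calc |(p 0).1 - po.1| = |((p t).1 - po.1) - ((p t).1 - (p 0).1)| := by ring_nf
                _ ≤ |(p t).1 - po.1| + |(p t).1 - (p 0).1| := abs_sub _ _
          _ ≤ _ := add_le_add (le_max_left _ _) (le_max_left _ _)
      · calc |(p 0).2 - po.2| = |((p t).2 - po.2) - ((p t).2 - (p 0).2)| := by ring_nf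
          _ ≤ |(p t).2 - po.2| + |(p t).2 - (p 0).2| := abs_sub _ _
          _ ≤ _ := add_le_add (le_max_right _ _) (le_max_right _ _)
    have hle : max |(p t).1 - (p 0).1| |(p t).2 - (p 0).2| ≤ v0 ^ 2 / (2 * B) := by
      rw [← hnorm]; exact key.trans hgle
    linarith
  have : ((p t).1 - po.1) ^ 2 + ((p t).2 - po.2) ^ 2 > 0 := by
    rcases max_cases |(p t).1 - po.1| |(p t).2 - po.2| with ⟨he, _⟩ | ⟨he, _⟩ <;>
      rw [he] at hpos <;> nlinarith [sq_nonneg ((p t).1 - po.1), sq_nonneg ((p t).2 - po.2), sq_abs ((p t).1 - po.1), sq_abs ((p t).2 - po.2), abs_nonneg ((p t).1 - po.1), abs_nonneg ((p t).2 - po.2)]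
  exact Real.sqrt_pos.mpr this
end

section
/- Let B > 0, A ≥ 0, ε > 0 and v0 ≥ 0 be real numbers, let a satisfy −B ≤ a ≤ A and v0 + a·t ≥ 0 for all t ∈ [0, ε], let p : ℝ → ℝ × ℝ be differentiable on [0, ε] with ‖p'(t)‖ ≤ v0 + a·t (Euclidean norm) for every t ∈ [0, ε], and let po ∈ ℝ × ℝ satisfy max(|p(0).1 − po.1|, |p(0).2 − po.2|) > v0²/(2·B) + (A/B + 1)·(A·ε²/2 + ε·v0). Then for every t ∈ [0, ε], max(|p(t).1 − po.1|, |p(t).2 − po.2|) > (v0 + a·t)²/(2·B). -/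
set_option maxHeartbeats 1000000 in
theorem planar_acceleration_preserves_invariant
    (B A ε v0 a : ℝ) (hB : B > 0) (hA : A ≥ 0) (hε : ε > 0) (hv0 : v0 ≥ 0)
    (ha1 : -B ≤ a) (ha2 : a ≤ A)
    (hvnonneg : ∀ t ∈ Set.Icc (0 : ℝ) ε, v0 + a * t ≥ 0)
    (p p' : ℝ → ℝ × ℝ)
    (hderiv : ∀ t ∈ Set.Icc (0 : ℝ) ε, HasDerivWithinAt p (p' t) (Set.Icc (0 : ℝ) ε) t)
    (hspeed : ∀ t ∈ Set.Icc (0 : ℝ) ε,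
      Real.sqrt ((p' t).1 ^ 2 + (p' t).2 ^ 2) ≤ v0 + a * t)
    (po : ℝ × ℝ)
    (hsafe : max |(p 0).1 - po.1| |(p 0).2 - po.2| >
      v0 ^ 2 / (2 * B) + (A / B + 1) * (A * ε ^ 2 / 2 + ε * v0)) :
    ∀ t ∈ Set.Icc (0 : ℝ) ε,
      max |(p t).1 - po.1| |(p t).2 - po.2| > (v0 + a * t) ^ 2 / (2 * B) := by
  -- sup norm bound on derivative
  have hbound : ∀ t ∈ Set.Icc (0 : ℝ) ε, ‖p' t‖ ≤ v0 + a * t := by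
    intro t ht
    refine le_trans ?_ (hspeed t ht)
    rw [Prod.norm_def]
    have h1 : ‖(p' t).1‖ ≤ Real.sqrt ((p' t).1 ^ 2 + (p' t).2 ^ 2) := by
      rw [Real.norm_eq_abs, ← Real.sqrt_sq_eq_abs]
      exact Real.sqrt_le_sqrt (by nlinarith [sq_nonneg (p' t).2])
    have h2 : ‖(p' t).2‖ ≤ Real.sqrt ((p' t).1 ^ 2 + (p' t).2 ^ 2) := by
      rw [Real.norm_eq_abs, ← Real.sqrt_sq_eq_abs]
      exact Real.sqrt_le_sqrt (by nlinarith [sq_nonneg (p' t).1])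
    exact max_le h1 h2
  -- displacement bound
  have hdisp : ∀ t ∈ Set.Icc (0 : ℝ) ε, ‖p t - p 0‖ ≤ v0 * t + a * t ^ 2 / 2 := by
    set g : ℝ → ℝ × ℝ := fun t => p t - p 0 with hg
    have hpc : ContinuousOn p (Set.Icc 0 ε) := fun x hx => (hderiv x hx).continuousWithinAt
    have hgc : ContinuousOn g (Set.Icc 0 ε) := hpc.sub continuousOn_const
    have hg' : ∀ x ∈ Set.Ico (0 : ℝ) ε, HasDerivWithinAt g (p' x) (Set.Ici x) x := by
      intro x hx
      have h : HasDerivWithinAt g (p' x) (Set.Icc 0 ε) x := by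
        exact (hderiv x ⟨hx.1, hx.2.le⟩).sub_const (p 0)
      exact h.mono_of_mem_nhdsWithin (Icc_mem_nhdsGE_of_mem ⟨hx.1, hx.2⟩)
    have hB' : ∀ x : ℝ, HasDerivAt (fun t => v0 * t + a * t ^ 2 / 2) (v0 + a * x) x := by
      intro x
      have : HasDerivAt (fun t : ℝ => v0 * t + a * t ^ 2 / 2)
          (v0 * 1 + a * (2 * x ^ 1) / 2) x :=
        ((hasDerivAt_id x).const_mul v0).add (((hasDerivAt_pow 2 x).const_mul a).div_const 2)
      convert this using 1
      ring
    have key := image_norm_le_of_norm_deriv_right_le_deriv_boundary hgc hg'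
      (by simp [hg]) hB' (fun x hx => hbound x ⟨hx.1, hx.2.le⟩)
    intro t ht
    simpa [hg] using key ht
  intro t ht
  have hnorm0 : max |(p 0).1 - po.1| |(p 0).2 - po.2| = ‖p 0 - po‖ := by
    rw [Prod.norm_def]; simp [Real.norm_eq_abs, Prod.fst_sub, Prod.snd_sub]
  have hnormt : max |(p t).1 - po.1| |(p t).2 - po.2| = ‖p t - po‖ := by
    rw [Prod.norm_def]; simp [Real.norm_eq_abs, Prod.fst_sub, Prod.snd_sub]
  rw [hnormt]
  rw [hnorm0] at hsafe
  have htri : ‖p 0 - po‖ - ‖p t - p 0‖ ≤ ‖p t - po‖ := by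
    have h2 : (p 0 - p t) + (p t - po) = p 0 - po := by abel
    have h3 : ‖p 0 - p t‖ = ‖p t - p 0‖ := norm_sub_rev _ _
    have h4 := norm_add_le (p 0 - p t) (p t - po)
    rw [h2, h3] at h4; linarith
  have hd := hdisp t ht
  have hlow : ‖p t - po‖ > v0 ^ 2 / (2 * B) + (A / B + 1) * (A * ε ^ 2 / 2 + ε * v0)
      - (v0 * t + a * t ^ 2 / 2) := by linarith
  refine lt_of_le_of_lt ?_ hlow
  have h2B : (0 : ℝ) < 2 * B := by linarith
  have ht0 : 0 ≤ t := ht.1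
  have htε : t ≤ ε := ht.2
  have hv : 0 ≤ v0 + a * t := hvnonneg t ht
  have hR : v0 ^ 2 / (2 * B) + (A / B + 1) * (A * ε ^ 2 / 2 + ε * v0) - (v0 * t + a * t ^ 2 / 2)
      = (v0 ^ 2 + (A + B) * (A * ε ^ 2 + 2 * ε * v0) - (2 * v0 * t + a * t ^ 2) * B) / (2 * B) := by
    field_simp
  rw [hR, div_le_div_iff₀ h2B h2B]
  have e1 : 2 * v0 * t * (a + B) ≤ 2 * ε * v0 * (A + B) := by
    nlinarith [mul_nonneg (mul_nonneg hv0 (sub_nonneg.2 htε)) (by linarith : (0:ℝ) ≤ a + B),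
      mul_nonneg (mul_nonneg hv0 hε.le) (sub_nonneg.2 ha2)]
  have haB : (0:ℝ) ≤ a + B := by linarith
  have hmain : 2 * v0 * t * (a + B) + a * t ^ 2 * (a + B) ≤
      2 * ε * v0 * (A + B) + A * ε ^ 2 * (A + B) := by
    rcases le_or_gt 0 a with hpos | hneg
    · have h5 : a * t ^ 2 ≤ A * ε ^ 2 := by
        nlinarith [mul_nonneg (sub_nonneg.2 ha2) (mul_nonneg hε.le hε.le),
          mul_nonneg hpos (mul_nonneg (sub_nonneg.2 htε) (by linarith : (0:ℝ) ≤ ε + t))]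
      have e2 : a * t ^ 2 * (a + B) ≤ A * ε ^ 2 * (A + B) := by
        have h6 := mul_le_mul_of_nonneg_right h5 haB
        have h7 : A * ε ^ 2 * (a + B) ≤ A * ε ^ 2 * (A + B) :=
          mul_le_mul_of_nonneg_left (by linarith) (mul_nonneg hA (sq_nonneg ε))
        linarith
      linarith
    · have h1 : a * t ^ 2 * (a + B) ≤ 0 :=
        mul_nonpos_of_nonpos_of_nonneg (by nlinarith [sq_nonneg t]) haB
      have h2 : 0 ≤ A * ε ^ 2 * (A + B) :=
        mul_nonneg (mul_nonneg hA (sq_nonneg ε)) (by linarith)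
      linarith
  linarith [mul_le_mul_of_nonneg_right hmain h2B.le]
end
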